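/- Let G be a finite simple graph of order n and let G/R be its maximal twin-free induced subgraph. Then log₂(ω(G/R)) + 1 ≤ χ_rlid(G) ≤ n; equivalently, ω(G/R) ≤ 2^(χ_rlid(G) − 1) and χ_rlid(G) ≤ n. -/
import Mathlib


open SimpleGraph Set

variable {V : Type*}

/-- The closed neighborhood of a vertex. -/
def closedNbhd (G : SimpleGraph V) (v : V) : Set V := insert v (G.neighborSet v)

/-- A (not necessarily proper) coloring `c : V → Fin k` is a relaxed locally identifying coloring
(rlid-coloring) if any two adjacent vertices with distinct closed neighborhoods receive distinct
sets of colors on their closed neighborhoods. -/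
def IsRlidColoring (G : SimpleGraph V) {k : ℕ} (c : V → Fin k) : Prop :=
  ∀ u v : V, G.Adj u v → closedNbhd G u ≠ closedNbhd G v →
    c '' closedNbhd G u ≠ c '' closedNbhd G v

/-- The relaxed locally identifying chromatic number: the least `k` such that `G` admits an
rlid-coloring with `k` colors. -/
noncomputable def rlidChromNum (G : SimpleGraph V) : ℕ :=
  sInf {k : ℕ | ∃ c : V → Fin k, IsRlidColoring G c}

/-- A graph is twin-free if distinct vertices have distinct closed neighborhoods. -/
def TwinFree (G : SimpleGraph V) : Prop :=
  ∀ u v : V, closedNbhd G u = closedNbhd G v → u = v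

/-- `T` is a set of representatives of the twin equivalence relation
(`u R v ↔ N[u] = N[v]`): it contains exactly one vertex from each equivalence class.
The induced subgraph `G.induce T` is then the maximal twin-free induced subgraph `G/R`. -/
def IsTwinRepSet (G : SimpleGraph V) (T : Set V) : Prop :=
  ∀ v : V, ∃! t, t ∈ T ∧ closedNbhd G v = closedNbhd G t

/-- For a finite graph `G` of order `n` with maximal twin-free induced subgraph
`G/R`, one has `log₂(ω(G/R)) + 1 ≤ χ_rlid(G) ≤ n`, i.e. `ω(G/R) ≤ 2 ^ (χ_rlid(G) − 1)` and
`χ_rlid(G) ≤ n`. -/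
theorem rlid_bounds {V : Type*} [Fintype V] (G : SimpleGraph V)
    (T : Set V) (hT : IsTwinRepSet G T) :
    (G.induce T).cliqueNum ≤ 2 ^ (rlidChromNum G - 1) ∧
    rlidChromNum G ≤ Fintype.card V := by
  classical
  -- the injective coloring is rlid
  have hmem : Fintype.card V ∈ {k : ℕ | ∃ c : V → Fin k, IsRlidColoring G c} := by
    obtain ⟨e⟩ := Fintype.truncEquivFin V
    exact ⟨e, fun u v _ hne heq => hne (by
      have := congrArg (fun S => (e : V → Fin _) ⁻¹' S) heq
      simpa [Set.preimage_image_eq _ e.injective] using this)⟩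
  have hub : rlidChromNum G ≤ Fintype.card V := Nat.sInf_le hmem
  refine ⟨?_, hub⟩
  -- obtain an optimal rlid coloring
  set k := rlidChromNum G with hk
  obtain ⟨c, hc⟩ : ∃ c : V → Fin k, IsRlidColoring G c :=
    Nat.sInf_mem (⟨Fintype.card V, hmem⟩ : Set.Nonempty _)
  -- distinct vertices in T have distinct closed neighborhoods
  have hTF : ∀ t t' : V, t ∈ T → t' ∈ T → closedNbhd G t = closedNbhd G t' → t = t' := by
    intro t t' ht ht' h
    obtain ⟨s, _, huniq⟩ := hT t
    exact (huniq t ⟨ht, rfl⟩).trans (huniq t' ⟨ht', h⟩).symm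
  -- bound every clique
  refine csSup_le ⟨0, ∅, by simp [isNClique_empty]⟩ ?_
  rintro n ⟨s, hs, rfl⟩
  rcases s.eq_empty_or_nonempty with rfl | ⟨t0, ht0⟩
  · simp
  · have hmemN : ∀ t ∈ s, (t0 : V) ∈ closedNbhd G (t : V) := by
      intro t ht
      rcases eq_or_ne t t0 with rfl | hne
      · exact Set.mem_insert _ _
      · have : G.Adj (t : V) (t0 : V) := hs ht ht0 hne
        exact Set.mem_insert_of_mem _ this
    have hkpos : 0 < k := Fin.pos (c t0)
    set f : {x // x ∈ T} → Finset (Fin k) :=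
      fun t => ((c '' closedNbhd G (t : V)).toFinset).erase (c (t0 : V)) with hf
    have hinj : Set.InjOn f s := by
      intro t ht t' ht' hft
      by_contra hne
      have hadj : G.Adj (t : V) (t' : V) := hs ht ht' hne
      have hcn : closedNbhd G (t : V) ≠ closedNbhd G (t' : V) := by
        intro h
        exact hne (Subtype.ext (hTF _ _ t.2 t'.2 h))
      apply hc _ _ hadj hcn
      have h1 : c (t0 : V) ∈ (c '' closedNbhd G (t : V)).toFinset := by
        simp only [Set.mem_toFinset]
        exact ⟨_, hmemN t ht, rfl⟩
      have h2 : c (t0 : V) ∈ (c '' closedNbhd G (t' : V)).toFinset := by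
        simp only [Set.mem_toFinset]
        exact ⟨_, hmemN t' ht', rfl⟩
      have := congrArg (insert (c (t0 : V))) hft
      rw [Finset.insert_erase h1, Finset.insert_erase h2] at this
      exact Set.toFinset_inj.mp this
    have hsub : ∀ t ∈ s, f t ∈ ((Finset.univ : Finset (Fin k)).erase (c (t0 : V))).powerset := by
      intro t _
      exact Finset.mem_powerset.mpr (Finset.erase_subset_erase _ (Finset.subset_univ _))
    have hcard := Finset.card_le_card_of_injOn f hsub hinj
    rw [Finset.card_powerset, Finset.card_erase_of_mem (Finset.mem_univ _),
      Finset.card_univ, Fintype.card_fin] at hcard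
    exact hcard
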